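/- Let α, α' be minimizers of the Lasso objective (1/2)‖x − Dz‖₂² + λ‖z‖₁ and (1/2)‖x − D'z‖₂² + λ‖z‖₁ respectively, with ‖x‖₂ ≤ 1 + ν and ‖D − D'‖₂ ≤ ε ≤ 2λ/(1+ν)². Then |‖Dα‖₂² − ‖D'α'‖₂²| ≤ (5ε/(2λ))(1+ν)². -/
import Mathlib


open scoped BigOperators
open Finset

noncomputable def l2 {n : ℕ} (x : Fin n → ℝ) : ℝ := Real.sqrt (∑ i, (x i) ^ 2)

noncomputable def l1 {n : ℕ} (x : Fin n → ℝ) : ℝ := ∑ i, |x i|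

noncomputable def inp {n : ℕ} (x y : Fin n → ℝ) : ℝ := ∑ i, x i * y i

/-- The Lasso objective `z ↦ (1/2)‖x − Dz‖₂² + λ‖z‖₁`. -/
noncomputable def lassoObj {d p : ℕ} (D : Matrix (Fin d) (Fin p) ℝ) (lam : ℝ)
    (x : Fin d → ℝ) (z : Fin p → ℝ) : ℝ :=
  (1 / 2) * (l2 (x - D.mulVec z)) ^ 2 + lam * l1 z

lemma l2_nonneg {n : ℕ} (x : Fin n → ℝ) : 0 ≤ l2 x := Real.sqrt_nonneg _

lemma l2_sq {n : ℕ} (x : Fin n → ℝ) : l2 x ^ 2 = ∑ i, x i ^ 2 :=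
  Real.sq_sqrt (Finset.sum_nonneg fun _ _ => sq_nonneg _)

lemma l1_nonneg {n : ℕ} (x : Fin n → ℝ) : 0 ≤ l1 x :=
  Finset.sum_nonneg fun _ _ => abs_nonneg _

lemma l1_zero {n : ℕ} : l1 (0 : Fin n → ℝ) = 0 := by simp [l1]

lemma l1_smul {n : ℕ} (c : ℝ) (z : Fin n → ℝ) : l1 (c • z) = |c| * l1 z := by
  simp [l1, abs_mul, Finset.mul_sum]

lemma inp_self {n : ℕ} (x : Fin n → ℝ) : inp x x = l2 x ^ 2 := by
  rw [l2_sq]; exact Finset.sum_congr rfl fun i _ => (sq (x i)).symm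

lemma l2_sub_sq {n : ℕ} (a b : Fin n → ℝ) :
    l2 (a - b) ^ 2 = l2 a ^ 2 - 2 * inp a b + l2 b ^ 2 := by
  simp only [l2_sq, inp, Pi.sub_apply, Finset.mul_sum]
  rw [← Finset.sum_sub_distrib, ← Finset.sum_add_distrib]
  exact Finset.sum_congr rfl fun i _ => by ring

lemma l2_add_sq {n : ℕ} (a b : Fin n → ℝ) :
    l2 (a + b) ^ 2 = l2 a ^ 2 + 2 * inp a b + l2 b ^ 2 := by
  simp only [l2_sq, inp, Pi.add_apply, Finset.mul_sum]
  rw [← Finset.sum_add_distrib, ← Finset.sum_add_distrib]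
  exact Finset.sum_congr rfl fun i _ => by ring

lemma abs_inp_le {n : ℕ} (a b : Fin n → ℝ) : |inp a b| ≤ l2 a * l2 b := by
  have h := Finset.sum_mul_sq_le_sq_mul_sq Finset.univ a b
  calc |inp a b| = Real.sqrt ((∑ i, a i * b i) ^ 2) := by
        rw [Real.sqrt_sq_eq_abs]; rfl
    _ ≤ Real.sqrt ((∑ i, a i ^ 2) * ∑ i, b i ^ 2) := Real.sqrt_le_sqrt h
    _ = l2 a * l2 b := Real.sqrt_mul (Finset.sum_nonneg fun _ _ => sq_nonneg _) _

lemma l2_le_l1 {n : ℕ} (z : Fin n → ℝ) : l2 z ≤ l1 z := by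
  have key : ∑ i, z i ^ 2 ≤ (∑ i, |z i|) ^ 2 := by
    rw [sq, Finset.sum_mul]
    refine Finset.sum_le_sum fun i _ => ?_
    have h1 : |z i| ≤ ∑ j, |z j| :=
      Finset.single_le_sum (fun j _ => abs_nonneg (z j)) (Finset.mem_univ i)
    calc z i ^ 2 = |z i| * |z i| := by rw [abs_mul_abs_self, sq]
      _ ≤ |z i| * (∑ j, |z j|) := mul_le_mul_of_nonneg_left h1 (abs_nonneg _)
  calc l2 z = Real.sqrt (∑ i, z i ^ 2) := rfl
    _ ≤ Real.sqrt ((∑ i, |z i|) ^ 2) := Real.sqrt_le_sqrt key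
    _ = |(∑ i, |z i|)| := Real.sqrt_sq_eq_abs _
    _ = l1 z := abs_of_nonneg (l1_nonneg z)

lemma inp_smul_right {n : ℕ} (t : ℝ) (a b : Fin n → ℝ) :
    inp a (t • b) = t * inp a b := by
  simp [inp, Finset.mul_sum]; exact Finset.sum_congr rfl fun i _ => by ring

lemma l2_smul_sq {n : ℕ} (t : ℝ) (b : Fin n → ℝ) :
    l2 (t • b) ^ 2 = t ^ 2 * l2 b ^ 2 := by
  simp [l2_sq, Finset.mul_sum]; exact Finset.sum_congr rfl fun i _ => by ring

/-- First-order optimality: for a minimizer, `⟨x − Dα, Dα⟩ = λ ‖α‖₁`. -/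
lemma lasso_opt_inner {d p : ℕ} (D : Matrix (Fin d) (Fin p) ℝ) (lam : ℝ)
    (x : Fin d → ℝ) (α : Fin p → ℝ)
    (hmin : ∀ z, lassoObj D lam x α ≤ lassoObj D lam x z) :
    inp (x - D.mulVec α) (D.mulVec α) = lam * l1 α := by
  set a := x - D.mulVec α with ha
  set K := l2 (D.mulVec α) ^ 2 with hKdef
  have hK : 0 ≤ K := by rw [hKdef]; positivity
  set c := lam * l1 α - inp a (D.mulVec α) with hc
  have key : ∀ t : ℝ, |t| ≤ 1 → 0 ≤ t * c + t ^ 2 * K / 2 := by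
    intro t ht
    have h := hmin ((1 + t) • α)
    have h1 : x - D.mulVec ((1 + t) • α) = a - t • D.mulVec α := by
      rw [Matrix.mulVec_smul, ha]
      ext i
      simp [Pi.smul_apply]
      ring
    have h2 : l1 ((1 + t) • α) = (1 + t) * l1 α := by
      rw [l1_smul]
      congr 1
      rw [abs_of_nonneg]
      have := abs_le.mp ht
      linarith [this.1]
    rw [lassoObj, lassoObj, h1, h2, ← ha,
      l2_sub_sq a (t • D.mulVec α), inp_smul_right, l2_smul_sq] at h
    rw [hc, hKdef]
    nlinarith [h]
  have hc0 : c = 0 := by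
    rcases lt_trichotomy c 0 with hlt | heq | hgt
    · exfalso
      set m := min 1 (-c / (K + 1)) with hm
      have hKpos : (0:ℝ) < K + 1 := by linarith
      have hm0 : 0 < m := lt_min one_pos (div_pos (by linarith) hKpos)
      have hm1 : m ≤ 1 := min_le_left _ _
      have hm2 : m * (K + 1) ≤ -c := by
        rw [← le_div_iff₀ hKpos]; exact min_le_right _ _
      have habs : |m| ≤ 1 := by rw [abs_of_pos hm0]; exact hm1
      have hkey := key m habs
      nlinarith [mul_le_mul_of_nonneg_left hm2 hm0.le, mul_pos hm0 hm0]
    · exact heq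
    · exfalso
      set m := min 1 (c / (K + 1)) with hm
      have hKpos : (0:ℝ) < K + 1 := by linarith
      have hm0 : 0 < m := lt_min one_pos (div_pos hgt hKpos)
      have hm1 : m ≤ 1 := min_le_left _ _
      have hm2 : m * (K + 1) ≤ c := by
        rw [← le_div_iff₀ hKpos]; exact min_le_right _ _
      have habs : |(-m)| ≤ 1 := by rw [abs_neg, abs_of_pos hm0]; exact hm1
      have hkey := key (-m) habs
      nlinarith [mul_le_mul_of_nonneg_left hm2 hm0.le, mul_pos hm0 hm0]
  rw [hc] at hc0
  linarith

/-- Optimal value identity. -/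
lemma lasso_value {d p : ℕ} (D : Matrix (Fin d) (Fin p) ℝ) (lam : ℝ)
    (x : Fin d → ℝ) (α : Fin p → ℝ)
    (hmin : ∀ z, lassoObj D lam x α ≤ lassoObj D lam x z) :
    lassoObj D lam x α = (1 / 2) * l2 x ^ 2 - (1 / 2) * l2 (D.mulVec α) ^ 2 := by
  have hopt := lasso_opt_inner D lam x α hmin
  have hsub : inp (x - D.mulVec α) (D.mulVec α)
      = inp x (D.mulVec α) - l2 (D.mulVec α) ^ 2 := by
    rw [← inp_self]
    simp only [inp, Pi.sub_apply]
    rw [← Finset.sum_sub_distrib]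
    exact Finset.sum_congr rfl fun i _ => by ring
  rw [lassoObj, l2_sub_sq]
  rw [hsub] at hopt
  linarith

/-- Cross bound: the objective of `D'` at a minimizer for `D` is close to that of `D`. -/
lemma cross_bound {d p : ℕ} (D D' : Matrix (Fin d) (Fin p) ℝ) (lam ν ε : ℝ)
    (hlam : 0 < lam) (hν : 0 ≤ ν) (hν1 : ν ≤ 1) (hε0 : 0 ≤ ε)
    (hε : ε * (1 + ν) ^ 2 ≤ 2 * lam)
    (x : Fin d → ℝ) (hx : l2 x ≤ 1 + ν)
    (hop : ∀ z : Fin p → ℝ, l2 ((D - D').mulVec z) ≤ ε * l2 z)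
    (α : Fin p → ℝ) (hmin : ∀ z, lassoObj D lam x α ≤ lassoObj D lam x z) :
    lassoObj D' lam x α ≤ lassoObj D lam x α + 5 * ε / (4 * lam) * (1 + ν) ^ 2 := by
  set a := x - D.mulVec α with ha
  set w := (D - D').mulVec α with hw
  -- bound at zero
  have h0 := hmin 0
  have hzero : lassoObj D lam x 0 = (1 / 2) * l2 x ^ 2 := by
    simp [lassoObj, l1_zero, Matrix.mulVec_zero]
  rw [hzero] at h0
  have hx2 : l2 x ^ 2 ≤ (1 + ν) ^ 2 := by
    nlinarith [l2_nonneg x]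
  have hobj : lassoObj D lam x α = (1 / 2) * l2 a ^ 2 + lam * l1 α := rfl
  have hl1 : lam * l1 α ≤ (1 / 2) * (1 + ν) ^ 2 := by
    nlinarith [sq_nonneg (l2 a)]
  have hα1 : l1 α ≤ (1 + ν) ^ 2 / (2 * lam) := by
    rw [le_div_iff₀ (by linarith)]; nlinarith
  have ha2 : l2 a ≤ 1 + ν := by
    nlinarith [l2_nonneg a, l1_nonneg α, mul_nonneg hlam.le (l1_nonneg α)]
  set E := ε * (1 + ν) ^ 2 / (2 * lam) with hE
  have hEnn : 0 ≤ E := by positivity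
  have hwE : l2 w ≤ E := by
    calc l2 w ≤ ε * l2 α := hop α
      _ ≤ ε * l1 α := mul_le_mul_of_nonneg_left (l2_le_l1 α) hε0
      _ ≤ ε * ((1 + ν) ^ 2 / (2 * lam)) := mul_le_mul_of_nonneg_left hα1 hε0
      _ = E := by rw [hE]; ring
  have hE1 : E ≤ 1 := by
    rw [hE, div_le_one (by linarith)]; linarith
  have hw1 : l2 w ≤ 1 := hwE.trans hE1
  -- decomposition
  have hxD' : x - D'.mulVec α = a + w := by
    rw [ha, hw, Matrix.sub_mulVec]
    ext i
    simp
  have hdecomp : lassoObj D' lam x α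
      = lassoObj D lam x α + inp a w + (1 / 2) * l2 w ^ 2 := by
    rw [lassoObj, hxD', l2_add_sq, hobj]; ring
  have hinp : inp a w ≤ (1 + ν) * E := by
    calc inp a w ≤ |inp a w| := le_abs_self _
      _ ≤ l2 a * l2 w := abs_inp_le a w
      _ ≤ (1 + ν) * E := by
          apply mul_le_mul ha2 hwE (l2_nonneg w) (by linarith)
  have hwsq : l2 w ^ 2 ≤ E := by
    nlinarith [l2_nonneg w]
  have hfin : (1 + ν) * E + (1 / 2) * E ≤ 5 * ε / (4 * lam) * (1 + ν) ^ 2 := by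
    have h52 : (5 / 2 : ℝ) * E = 5 * ε / (4 * lam) * (1 + ν) ^ 2 := by
      rw [hE]; field_simp; ring
    nlinarith
  linarith [hdecomp, hinp, hwsq]

/-- stability of the norm of the Lasso reconstruction under dictionary perturbations. -/
theorem stmt6 {d p : ℕ} (D D' : Matrix (Fin d) (Fin p) ℝ) (lam ν ε : ℝ)
    (hlam : 0 < lam) (hν : 0 ≤ ν) (hν1 : ν ≤ 1) (hε0 : 0 ≤ ε)
    (hε : ε ≤ 2 * lam / (1 + ν) ^ 2)
    (x : Fin d → ℝ) (hx : l2 x ≤ 1 + ν)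
    (hop : ∀ z : Fin p → ℝ, l2 ((D - D').mulVec z) ≤ ε * l2 z)
    (α : Fin p → ℝ) (hmin : ∀ z, lassoObj D lam x α ≤ lassoObj D lam x z)
    (α' : Fin p → ℝ) (hmin' : ∀ z, lassoObj D' lam x α' ≤ lassoObj D' lam x z) :
    |(l2 (D.mulVec α)) ^ 2 - (l2 (D'.mulVec α')) ^ 2| ≤ (5 * ε / (2 * lam)) * (1 + ν) ^ 2 := by
  have hν2 : (0:ℝ) < (1 + ν) ^ 2 := by positivity
  have hε' : ε * (1 + ν) ^ 2 ≤ 2 * lam := (le_div_iff₀ hν2).mp hε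
  have hop' : ∀ z : Fin p → ℝ, l2 ((D' - D).mulVec z) ≤ ε * l2 z := by
    intro z
    have : (D' - D).mulVec z = -((D - D').mulVec z) := by
      rw [(neg_sub D D').symm, Matrix.neg_mulVec]
    rw [this]
    have hneg : l2 (-((D - D').mulVec z)) = l2 ((D - D').mulVec z) := by
      simp [l2]
    rw [hneg]; exact hop z
  have hc1 := cross_bound D D' lam ν ε hlam hν hν1 hε0 hε' x hx hop α hmin
  have hc2 := cross_bound D' D lam ν ε hlam hν hν1 hε0 hε' x hx hop' α' hmin'
  have hv := lasso_value D lam x α hmin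
  have hv' := lasso_value D' lam x α' hmin'
  have h1 : lassoObj D' lam x α' ≤ lassoObj D' lam x α := hmin' α
  have h2 : lassoObj D lam x α ≤ lassoObj D lam x α' := hmin α'
  set B := 5 * ε / (4 * lam) * (1 + ν) ^ 2 with hB
  have hBB : (5 * ε / (2 * lam)) * (1 + ν) ^ 2 = 2 * B := by
    rw [hB]; field_simp; ring
  rw [hBB, abs_le]
  constructor <;> nlinarith [hc1, hc2, hv, hv', h1, h2]
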